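/- arXiv:1404.5940 — 2 statements merged into one kernel-verified Lean document; each statement's English description precedes it below -/
import Mathlib

section
/- Let ρ^{AB} be a bipartite density matrix, σ^{AB} a separable density matrix with σ^{AB} ≤ σ^A ⊗ I^B, and α ∈ (1,2]. Then S_α(ρ^{AB} ‖ σ^{AB}) ≥ (1/(α−1)) log Tr[(Tr_B (ρ^{AB})^α)(σ^A)^{1−α}], where S_α(ρ‖σ) = (1/(α−1)) log Tr(ρ^α σ^{1−α}). -/
open Matrix BigOperators Kronecker ComplexOrder

noncomputable def funCalc {n : Type*} [Fintype n] [DecidableEq n]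
    (f : ℝ → ℝ) (A : Matrix n n ℂ) : Matrix n n ℂ :=
  if h : A.IsHermitian then
    (h.eigenvectorUnitary : Matrix n n ℂ) *
      Matrix.diagonal (fun i => (f (h.eigenvalues i) : ℂ)) *
      star (h.eigenvectorUnitary : Matrix n n ℂ)
  else 0

/-- Matrix power via functional calculus. -/
noncomputable def mpow {n : Type*} [Fintype n] [DecidableEq n]
    (A : Matrix n n ℂ) (α : ℝ) : Matrix n n ℂ :=
  funCalc (fun x => x ^ α) A

/-- A density matrix: positive semidefinite with unit trace. -/
def IsDensity {n : Type*} [Fintype n] [DecidableEq n] (ρ : Matrix n n ℂ) : Prop :=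
  ρ.PosSemidef ∧ ρ.trace = 1

/-- Partial trace over the second factor. -/
noncomputable def ptraceB {a b : Type*} [Fintype a] [Fintype b]
    (M : Matrix (a × b) (a × b) ℂ) : Matrix a a ℂ :=
  Matrix.of fun i j => ∑ k : b, M (i, k) (j, k)

/-- Partial trace over the first factor. -/
noncomputable def ptraceA {a b : Type*} [Fintype a] [Fintype b]
    (M : Matrix (a × b) (a × b) ℂ) : Matrix b b ℂ :=
  Matrix.of fun i j => ∑ k : a, M (k, i) (k, j)

/-- Fidelity F(ρ,σ) = Tr √(√σ ρ √σ). -/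
noncomputable def fid {n : Type*} [Fintype n] [DecidableEq n]
    (ρ σ : Matrix n n ℂ) : ℝ :=
  ((mpow (mpow σ (1/2) * ρ * mpow σ (1/2)) (1/2)).trace).re

/-- Outer product |ψ⟩⟨ψ|. -/
noncomputable def outer {n : Type*} (ψ : n → ℂ) : Matrix n n ℂ :=
  Matrix.of fun i j => ψ i * star (ψ j)

/-- Separability of a bipartite state. -/
def IsSepState {a b : Type*} [Fintype a] [Fintype b] [DecidableEq a] [DecidableEq b]
    (σ : Matrix (a × b) (a × b) ℂ) : Prop :=
  ∃ (k : ℕ) (q : Fin k → ℝ) (τ : Fin k → Matrix a a ℂ) (ω : Fin k → Matrix b b ℂ),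
    (∀ i, 0 ≤ q i) ∧ (∑ i, q i = 1) ∧ (∀ i, IsDensity (τ i)) ∧ (∀ i, IsDensity (ω i)) ∧
    σ = ∑ i, (q i : ℂ) • (τ i ⊗ₖ ω i)

/-- von Neumann entropy (base 2). -/
noncomputable def vnEntropy {n : Type*} [Fintype n] [DecidableEq n]
    (τ : Matrix n n ℂ) : ℝ :=
  -(τ * funCalc (Real.logb 2) τ).trace.re

/-- Rényi entropy of order β (base 2), with the von Neumann limit at β = 1. -/
noncomputable def renyiEntropy {n : Type*} [Fintype n] [DecidableEq n]
    (β : ℝ) (τ : Matrix n n ℂ) : ℝ :=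
  if β = 1 then vnEntropy τ else (1 / (1 - β)) * Real.logb 2 ((mpow τ β).trace.re)

/-- Rényi relative entropy of order α (base 2). -/
noncomputable def renyiRel {n : Type*} [Fintype n] [DecidableEq n]
    (α : ℝ) (ρ σ : Matrix n n ℂ) : ℝ :=
  (1 / (α - 1)) * Real.logb 2 ((mpow ρ α * mpow σ (1 - α)).trace.re)


set_option linter.unusedSectionVars false
set_option maxHeartbeats 1200000

namespace RenyiAux
open MeasureTheory Set Real
variable {N : Type*} [Fintype N] [DecidableEq N]


lemma contOn {t l : ℝ} (hl : 0 < l) :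
    ContinuousOn (fun s : ℝ => s ^ (-t) * (l + s)⁻¹) (Ioi 0) := by
  apply ContinuousOn.mul
  · intro s hs
    exact (Real.continuousAt_rpow_const s (-t) (Or.inl (ne_of_gt hs))).continuousWithinAt
  · apply ContinuousOn.inv₀
    · fun_prop
    · intro s hs
      have : (0:ℝ) < s := hs
      positivity

lemma integrableOn_aux {t l : ℝ} (ht0 : 0 < t) (ht1 : t < 1) (hl : 0 < l) :
    IntegrableOn (fun s : ℝ => s ^ (-t) * (l + s)⁻¹) (Ioi 0) := by
  have hunion : Ioc (0:ℝ) 1 ∪ Ioi 1 = Ioi 0 := Ioc_union_Ioi_eq_Ioi zero_le_one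
  rw [← hunion]
  apply IntegrableOn.union
  · -- dominate by s ^ (-t) * l⁻¹
    have hint : IntegrableOn (fun s : ℝ => s ^ (-t) * l⁻¹) (Ioc (0:ℝ) 1) := by
      apply Integrable.mul_const
      have := (intervalIntegral.intervalIntegrable_rpow' (a := 0) (b := 1)
        (by linarith : (-1:ℝ) < -t))
      rwa [intervalIntegrable_iff_integrableOn_Ioc_of_le zero_le_one] at this
    apply Integrable.mono hint
    · exact ((contOn hl).mono Ioc_subset_Ioi_self).aestronglyMeasurable measurableSet_Ioc
    · filter_upwards [ae_restrict_mem measurableSet_Ioc] with s hs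
      have hs0 : (0:ℝ) < s := hs.1
      have h1 : (l + s)⁻¹ ≤ l⁻¹ := by
        apply inv_anti₀ hl; linarith
      have h2 : (0:ℝ) ≤ s ^ (-t) := rpow_nonneg hs0.le _
      rw [norm_mul, norm_mul]
      simp only [Real.norm_eq_abs]
      rw [abs_of_nonneg h2, abs_of_nonneg (by positivity : (0:ℝ) ≤ (l+s)⁻¹),
        abs_of_nonneg (by positivity : (0:ℝ) ≤ l⁻¹)]
      exact mul_le_mul_of_nonneg_left h1 h2
  · -- dominate by s ^ (-t - 1)
    have hint : IntegrableOn (fun s : ℝ => s ^ (-t - 1)) (Ioi (1:ℝ)) :=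
      integrableOn_Ioi_rpow_of_lt (by linarith) one_pos
    apply Integrable.mono hint
    · exact ((contOn hl).mono (Ioi_subset_Ioi zero_le_one)).aestronglyMeasurable measurableSet_Ioi
    · filter_upwards [ae_restrict_mem measurableSet_Ioi] with s hs
      have hs1 : (1:ℝ) < s := hs
      have hs0 : (0:ℝ) < s := lt_trans one_pos hs1
      have h1 : (l + s)⁻¹ ≤ s⁻¹ := by
        apply inv_anti₀ hs0; linarith
      have h2 : (0:ℝ) ≤ s ^ (-t) := rpow_nonneg hs0.le _
      rw [norm_mul]
      simp only [Real.norm_eq_abs]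
      rw [abs_of_nonneg h2, abs_of_nonneg (by positivity : (0:ℝ) ≤ (l+s)⁻¹),
        abs_of_nonneg (by positivity : (0:ℝ) ≤ s ^ (-t-1))]
      calc s ^ (-t) * (l+s)⁻¹ ≤ s ^ (-t) * s⁻¹ := mul_le_mul_of_nonneg_left h1 h2
        _ = s ^ (-t - 1) := by
            rw [← Real.rpow_neg_one s, ← Real.rpow_add hs0]; ring_nf

lemma integral_aux {t l : ℝ} (hl : 0 < l) :
    ∫ s in Ioi (0:ℝ), s ^ (-t) * (l + s)⁻¹
      = l ^ (-t) * ∫ s in Ioi (0:ℝ), s ^ (-t) * (1 + s)⁻¹ := by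
  have h := integral_comp_mul_left_Ioi (fun s : ℝ => s ^ (-t) * (l + s)⁻¹) 0 hl
  rw [mul_zero] at h
  have heq : ∀ x ∈ Ioi (0:ℝ),
      (l * x) ^ (-t) * (l + l * x)⁻¹ = l ^ (-t) * l⁻¹ * (x ^ (-t) * (1 + x)⁻¹) := by
    intro x hx
    have hx0 : (0:ℝ) < x := hx
    rw [Real.mul_rpow hl.le hx0.le]
    have : l + l * x = l * (1 + x) := by ring
    rw [this, mul_inv]
    ring
  rw [setIntegral_congr_fun measurableSet_Ioi heq, integral_const_mul] at h
  have h2 := congrArg (fun z => l * z) h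
  simp only [smul_eq_mul, ← mul_assoc] at h2
  rw [mul_inv_cancel₀ hl.ne', one_mul] at h2
  rw [← h2, mul_comm l (l ^ (-t)), mul_assoc, mul_assoc, mul_inv_cancel_left₀ hl.ne']

lemma kappa_pos {t : ℝ} (ht0 : 0 < t) (ht1 : t < 1) :
    0 < ∫ s in Ioi (0:ℝ), s ^ (-t) * (1 + s)⁻¹ := by
  rw [setIntegral_pos_iff_support_of_nonneg_ae ?hnn (integrableOn_aux ht0 ht1 one_pos)]
  case hnn =>
    filter_upwards [ae_restrict_mem measurableSet_Ioi] with s hs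
    have hs0 : (0:ℝ) < s := hs
    positivity
  · have hsub : Ioi (0:ℝ) ⊆ Function.support (fun s : ℝ => s ^ (-t) * (1 + s)⁻¹) := by
      intro s hs
      have hs0 : (0:ℝ) < s := hs
      have : 0 < s ^ (-t) * (1 + s)⁻¹ := by positivity
      exact ne_of_gt this
    have : Function.support (fun s : ℝ => s ^ (-t) * (1 + s)⁻¹) ∩ Ioi 0 = Ioi 0 := by
      rw [inter_eq_right]; exact hsub
    rw [this, Real.volume_Ioi]
    simp



variable {N : Type*} [Fintype N] [DecidableEq N]

lemma re_trace_eq_sum (M : Matrix N N ℂ) : M.trace.re = ∑ i, (M i i).re := by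
  simp [Matrix.trace, Matrix.diag, Complex.re_sum]

lemma psd_diag_re_nonneg {P : Matrix N N ℂ} (hP : P.PosSemidef) (i : N) : 0 ≤ (P i i).re := by
  have h := hP.dotProduct_mulVec_nonneg (Pi.single i 1)
  have hstar : star (Pi.single i 1 : N → ℂ) = Pi.single i 1 := by
    ext x; simp [Pi.single_apply, apply_ite (star : ℂ → ℂ)]
  rw [hstar, single_dotProduct, one_mul] at h
  simp only [Matrix.mulVec_single, mul_one] at h
  simpa using (Complex.le_def.mp h).1

open scoped MatrixOrder in
lemma trace_mul_psd_nonneg {T M : Matrix N N ℂ} (hT : T.PosSemidef) (hM : M.PosSemidef) :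
    0 ≤ (T * M).trace.re := by
  obtain ⟨C, rfl⟩ : ∃ C : Matrix N N ℂ, T = Cᴴ * C :=
    ⟨CFC.sqrt T, by rw [(CFC.sqrt_nonneg T).posSemidef.1.eq, CFC.sqrt_mul_sqrt_self T hT.nonneg]⟩
  rw [← Matrix.trace_mul_cycle]
  have hP : (C * M * Cᴴ).PosSemidef := hM.mul_mul_conjTranspose_same C
  rw [re_trace_eq_sum]
  exact Finset.sum_nonneg fun i _ => psd_diag_re_nonneg hP i

lemma trace_mul_mono {T X Y : Matrix N N ℂ} (hT : T.PosSemidef) (hXY : (X - Y).PosSemidef) :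
    (T * Y).trace.re ≤ (T * X).trace.re := by
  have h := trace_mul_psd_nonneg hT hXY
  rw [Matrix.mul_sub, Matrix.trace_sub, Complex.sub_re] at h
  linarith

lemma trace_conj_diag (T W : Matrix N N ℂ) (d : N → ℝ) :
    (T * (W * Matrix.diagonal (fun i => (d i : ℂ)) * star W)).trace.re
      = ∑ i, ((star W * T * W) i i).re * d i := by
  have h1 : T * (W * Matrix.diagonal (fun i => (d i : ℂ)) * star W)
      = (T * W) * Matrix.diagonal (fun i => (d i : ℂ)) * star W := by
    simp only [Matrix.mul_assoc]
  rw [h1, Matrix.trace_mul_comm]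
  have h2 : star W * (T * W * Matrix.diagonal (fun i => (d i : ℂ)))
      = (star W * T * W) * Matrix.diagonal (fun i => (d i : ℂ)) := by
    simp only [Matrix.mul_assoc]
  rw [h2]
  rw [re_trace_eq_sum]
  congr 1; ext i
  rw [Matrix.mul_diagonal]
  simp [Complex.mul_re]



variable {N : Type*} [Fintype N] [DecidableEq N]

set_option linter.unusedSectionVars false

lemma posDef_conj {A C : Matrix N N ℂ} (hA : A.PosDef) (hC : IsUnit C.det) :
    (Cᴴ * A * C).PosDef := by
  refine Matrix.PosDef.of_dotProduct_mulVec_pos (Matrix.isHermitian_conjTranspose_mul_mul C hA.1) fun x hx => ?_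
  have hinj : Function.Injective C.mulVec :=
    (Matrix.mulVec_injective_iff_isUnit).mpr ((Matrix.isUnit_iff_isUnit_det C).mpr hC)
  have hx' : C *ᵥ x ≠ 0 := fun h => hx (hinj (by simpa using h))
  simpa only [star_mulVec, Matrix.dotProduct_mulVec, Matrix.vecMul_vecMul] using hA.dotProduct_mulVec_pos hx'

lemma posDef_conj' {A C : Matrix N N ℂ} (hA : A.PosDef) (hC : IsUnit C.det) :
    (C * A * Cᴴ).PosDef := by
  have hdet : IsUnit Cᴴ.det := by rw [Matrix.det_conjTranspose]; exact hC.star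
  simpa [Matrix.conjTranspose_conjTranspose] using posDef_conj hA hdet

lemma unitary_det_isUnit {W : Matrix N N ℂ} (hW' : star W * W = 1) : IsUnit W.det := by
  have := congrArg Matrix.det hW'
  rw [Matrix.det_mul, Matrix.det_one] at this
  exact IsUnit.of_mul_eq_one _ (by rw [mul_comm]; exact this)

lemma unitary_conj_posDef {W : Matrix N N ℂ} (hW' : star W * W = 1)
    {d : N → ℝ} (hd : ∀ i, 0 < d i) :
    (W * Matrix.diagonal (fun i => (d i : ℂ)) * star W).PosDef := by
  have hdiag : (Matrix.diagonal (fun i => (d i : ℂ))).PosDef := by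
    rw [Matrix.posDef_diagonal_iff]
    intro i
    exact_mod_cast hd i
  have h := posDef_conj' hdiag (unitary_det_isUnit hW')
  rwa [Matrix.star_eq_conjTranspose]

lemma unitary_conj_posSemidef {W : Matrix N N ℂ} {d : N → ℝ} (hd : ∀ i, 0 ≤ d i) :
    (W * Matrix.diagonal (fun i => (d i : ℂ)) * star W).PosSemidef := by
  have hdiag : (Matrix.diagonal (fun i => (d i : ℂ))).PosSemidef := by
    rw [Matrix.posSemidef_diagonal_iff]
    intro i
    exact_mod_cast hd i
  have h := hdiag.mul_mul_conjTranspose_same W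
  rwa [Matrix.star_eq_conjTranspose]

lemma conj_diag_add_smul_inv {W : Matrix N N ℂ} (hW : W * star W = 1)
    {d : N → ℝ} (hd : ∀ i, 0 < d i) (s : ℝ) (hs : 0 ≤ s) :
    (W * Matrix.diagonal (fun i => (d i : ℂ)) * star W + (s : ℂ) • 1)⁻¹
      = W * Matrix.diagonal (fun i => (((d i + s)⁻¹ : ℝ) : ℂ)) * star W := by
  have hW' : star W * W = 1 := mul_eq_one_comm.mp hW
  apply Matrix.inv_eq_right_inv
  have h1 : Matrix.diagonal (fun _ : N => (s : ℂ)) = (s : ℂ) • 1 := by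
    ext i j
    by_cases h : i = j <;> simp [Matrix.diagonal_apply, Matrix.one_apply, h]
  have hsmul : (s : ℂ) • (1 : Matrix N N ℂ) = W * Matrix.diagonal (fun _ => (s : ℂ)) * star W := by
    rw [h1, mul_smul_comm, smul_mul_assoc, Matrix.mul_one, hW]
  have hadd : W * Matrix.diagonal (fun i => (d i : ℂ)) * star W + (s : ℂ) • 1
      = W * Matrix.diagonal (fun i => ((d i + s : ℝ) : ℂ)) * star W := by
    rw [hsmul, ← Matrix.add_mul, ← Matrix.mul_add, Matrix.diagonal_add]
    have hfun : (fun i => ((d i : ℂ) + (s : ℂ))) = fun i => ((d i + s : ℝ) : ℂ) := by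
      ext i; push_cast; ring
    rw [hfun]
  rw [hadd]
  have key : (Matrix.diagonal (fun i => ((d i + s : ℝ) : ℂ)) : Matrix N N ℂ) *
      (Matrix.diagonal (fun i => (((d i + s)⁻¹ : ℝ) : ℂ))) = 1 := by
    rw [Matrix.diagonal_mul_diagonal, ← Matrix.diagonal_one]
    have hfun : (fun i => ((d i + s : ℝ) : ℂ) * (((d i + s)⁻¹ : ℝ) : ℂ)) = fun _ : N => (1 : ℂ) := by
      funext i
      have h0 : (d i + s : ℝ) ≠ 0 := by have := hd i; positivity
      have h0' : ((d i + s : ℝ) : ℂ) ≠ 0 := Complex.ofReal_ne_zero.mpr h0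
      rw [Complex.ofReal_inv]
      exact mul_inv_cancel₀ h0'
    rw [hfun]
  calc (W * Matrix.diagonal (fun i => ((d i + s : ℝ) : ℂ)) * star W) *
        (W * Matrix.diagonal (fun i => (((d i + s)⁻¹ : ℝ) : ℂ)) * star W)
      = W * (Matrix.diagonal (fun i => ((d i + s : ℝ) : ℂ)) * (star W * W) *
          Matrix.diagonal (fun i => (((d i + s)⁻¹ : ℝ) : ℂ))) * star W := by
        simp only [Matrix.mul_assoc]
    _ = 1 := by rw [hW', Matrix.mul_one, key, Matrix.mul_one, hW]



variable {N : Type*} [Fintype N] [DecidableEq N]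

set_option linter.unusedSectionVars false
set_option maxHeartbeats 800000

open scoped MatrixOrder in
lemma sqrt_det_isUnit {B : Matrix N N ℂ} (hB : B.PosDef) :
    IsUnit (CFC.sqrt B).det := by
  rw [isUnit_iff_ne_zero]
  intro h
  have h2 : CFC.sqrt B * CFC.sqrt B = B := CFC.sqrt_mul_sqrt_self B hB.posSemidef.nonneg
  have h3 := congrArg Matrix.det h2
  rw [Matrix.det_mul, h, mul_zero] at h3
  exact (ne_of_gt hB.det_pos) h3.symm

open scoped MatrixOrder in
lemma inv_sub_inv_posSemidef {A B : Matrix N N ℂ} (hA : A.PosDef) (hB : B.PosDef)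
    (hAB : (B - A).PosSemidef) : (A⁻¹ - B⁻¹).PosSemidef := by
  set R := CFC.sqrt B with hRdef
  have hRR : R * R = B := CFC.sqrt_mul_sqrt_self B hB.posSemidef.nonneg
  have hRH : R.IsHermitian := (CFC.sqrt_nonneg B).posSemidef.1
  have hRdet : IsUnit R.det := sqrt_det_isUnit hB
  have hRinv : R * R⁻¹ = 1 := Matrix.mul_nonsing_inv R hRdet
  have hRinv' : R⁻¹ * R = 1 := Matrix.nonsing_inv_mul R hRdet
  have hRiH : (R⁻¹).IsHermitian := by
    unfold Matrix.IsHermitian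
    rw [Matrix.conjTranspose_nonsing_inv, hRH.eq]
  have hRidet : IsUnit (R⁻¹).det := Matrix.isUnit_nonsing_inv_det R hRdet
  set M := R⁻¹ * A * R⁻¹ with hMdef
  have hM : M.PosDef := by
    have := posDef_conj (C := R⁻¹) hA hRidet
    rwa [show (R⁻¹)ᴴ = R⁻¹ from hRiH.eq] at this
  have h1M : (1 - M).PosSemidef := by
    have hcalc : R⁻¹ * (B - A) * R⁻¹ = 1 - M := by
      rw [Matrix.mul_sub, Matrix.sub_mul, hMdef]
      congr 1
      calc R⁻¹ * B * R⁻¹ = R⁻¹ * (R * R) * R⁻¹ := by rw [hRR]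
        _ = (R⁻¹ * R) * (R * R⁻¹) := by simp only [Matrix.mul_assoc]
        _ = 1 := by rw [hRinv', hRinv, Matrix.mul_one]
    have := hAB.mul_mul_conjTranspose_same R⁻¹
    rwa [show (R⁻¹)ᴴ = R⁻¹ from hRiH.eq, hcalc] at this
  -- S = sqrt of M⁻¹
  have hMi : (M⁻¹).PosDef := hM.inv
  set S := CFC.sqrt M⁻¹ with hSdef
  have hSS : S * S = M⁻¹ := CFC.sqrt_mul_sqrt_self M⁻¹ hMi.posSemidef.nonneg
  have hSH : S.IsHermitian := (CFC.sqrt_nonneg M⁻¹).posSemidef.1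
  have hSdet : IsUnit S.det := sqrt_det_isUnit hMi
  have hMdet : IsUnit M.det := (Matrix.isUnit_iff_isUnit_det M).mp hM.isUnit
  have hSMS : S * M * S = 1 := by
    have hMinv : M = (S * S)⁻¹ := by rw [hSS, Matrix.nonsing_inv_nonsing_inv M hMdet]
    rw [hMinv, Matrix.mul_inv_rev]
    calc S * (S⁻¹ * S⁻¹) * S = (S * S⁻¹) * (S⁻¹ * S) := by simp only [Matrix.mul_assoc]
      _ = 1 := by rw [Matrix.mul_nonsing_inv S hSdet, Matrix.nonsing_inv_mul S hSdet, Matrix.mul_one]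
  have hkey : (M⁻¹ - 1).PosSemidef := by
    have hcalc : S * (1 - M) * S = M⁻¹ - 1 := by
      rw [Matrix.mul_sub, Matrix.sub_mul, Matrix.mul_one, hSS, hSMS]
    have := h1M.mul_mul_conjTranspose_same S
    rwa [show Sᴴ = S from hSH.eq, hcalc] at this
  -- transport back
  have hfinal : R⁻¹ * (M⁻¹ - 1) * R⁻¹ = A⁻¹ - B⁻¹ := by
    have hMinv2 : M⁻¹ = R * A⁻¹ * R := by
      rw [hMdef, Matrix.mul_inv_rev, Matrix.mul_inv_rev, Matrix.nonsing_inv_nonsing_inv R hRdet]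
      simp only [Matrix.mul_assoc]
    rw [Matrix.mul_sub, Matrix.sub_mul, hMinv2, Matrix.mul_one]
    congr 1
    · calc R⁻¹ * (R * A⁻¹ * R) * R⁻¹ = (R⁻¹ * R) * A⁻¹ * (R * R⁻¹) := by simp only [Matrix.mul_assoc]
        _ = A⁻¹ := by rw [hRinv', hRinv, Matrix.one_mul, Matrix.mul_one]
    · rw [← Matrix.mul_inv_rev, hRR]
  have := hkey.mul_mul_conjTranspose_same R⁻¹
  rwa [show (R⁻¹)ᴴ = R⁻¹ from hRiH.eq, hfinal] at this


variable {N : Type*} [Fintype N] [DecidableEq N]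
set_option linter.unusedSectionVars false

lemma smul_one_posSemidef {s : ℝ} (hs : 0 ≤ s) :
    ((s : ℂ) • (1 : Matrix N N ℂ)).PosSemidef := by
  have h1 : (s : ℂ) • (1 : Matrix N N ℂ) = Matrix.diagonal (fun _ => (s : ℂ)) := by
    ext i j
    by_cases h : i = j <;> simp [Matrix.diagonal_apply, Matrix.one_apply, h]
  rw [h1, Matrix.posSemidef_diagonal_iff]
  intro i
  exact_mod_cast hs

lemma key_ineq (T W₁ W₂ : Matrix N N ℂ) (μ₁ μ₂ : N → ℝ) (hT : T.PosSemidef)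
    (hW₁ : W₁ * star W₁ = 1) (hW₂ : W₂ * star W₂ = 1)
    (hμ₁ : ∀ i, 0 < μ₁ i) (hμ₂ : ∀ i, 0 < μ₂ i)
    (hle : ((W₂ * Matrix.diagonal (fun i => (μ₂ i : ℂ)) * star W₂)
        - (W₁ * Matrix.diagonal (fun i => (μ₁ i : ℂ)) * star W₁)).PosSemidef)
    (t : ℝ) (ht0 : 0 < t) (ht1 : t ≤ 1) :
    (T * (W₂ * Matrix.diagonal (fun i => ((μ₂ i ^ (-t) : ℝ) : ℂ)) * star W₂)).trace.re
      ≤ (T * (W₁ * Matrix.diagonal (fun i => ((μ₁ i ^ (-t) : ℝ) : ℂ)) * star W₁)).trace.re := by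
  have hW₁' : star W₁ * W₁ = 1 := mul_eq_one_comm.mp hW₁
  have hW₂' : star W₂ * W₂ = 1 := mul_eq_one_comm.mp hW₂
  set B₁ := W₁ * Matrix.diagonal (fun i => (μ₁ i : ℂ)) * star W₁ with hB₁def
  set B₂ := W₂ * Matrix.diagonal (fun i => (μ₂ i : ℂ)) * star W₂ with hB₂def
  have hB₁ : B₁.PosDef := unitary_conj_posDef hW₁' hμ₁
  have hB₂ : B₂.PosDef := unitary_conj_posDef hW₂' hμ₂
  set c : N → ℝ := fun i => ((star W₁ * T * W₁) i i).re with hcdef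
  set e : N → ℝ := fun i => ((star W₂ * T * W₂) i i).re with hedef
  have hc : ∀ i, 0 ≤ c i := fun i => by
    have := hT.conjTranspose_mul_mul_same W₁
    rw [← Matrix.star_eq_conjTranspose] at this
    exact psd_diag_re_nonneg this i
  have he : ∀ i, 0 ≤ e i := fun i => by
    have := hT.conjTranspose_mul_mul_same W₂
    rw [← Matrix.star_eq_conjTranspose] at this
    exact psd_diag_re_nonneg this i
  -- the two sides as sums
  have hRHS : (T * (W₁ * Matrix.diagonal (fun i => ((μ₁ i ^ (-t) : ℝ) : ℂ)) * star W₁)).trace.re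
      = ∑ i, c i * μ₁ i ^ (-t) := trace_conj_diag T W₁ _
  have hLHS : (T * (W₂ * Matrix.diagonal (fun i => ((μ₂ i ^ (-t) : ℝ) : ℂ)) * star W₂)).trace.re
      = ∑ i, e i * μ₂ i ^ (-t) := trace_conj_diag T W₂ _
  rw [hRHS, hLHS]
  -- pointwise resolvent comparison
  have hmono : ∀ s : ℝ, 0 ≤ s → ∑ i, e i * (μ₂ i + s)⁻¹ ≤ ∑ i, c i * (μ₁ i + s)⁻¹ := by
    intro s hs
    have h₁ : (T * (B₁ + (s : ℂ) • 1)⁻¹).trace.re = ∑ i, c i * (μ₁ i + s)⁻¹ := by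
      rw [hB₁def, conj_diag_add_smul_inv hW₁ hμ₁ s hs]
      exact trace_conj_diag T W₁ _
    have h₂ : (T * (B₂ + (s : ℂ) • 1)⁻¹).trace.re = ∑ i, e i * (μ₂ i + s)⁻¹ := by
      rw [hB₂def, conj_diag_add_smul_inv hW₂ hμ₂ s hs]
      exact trace_conj_diag T W₂ _
    rw [← h₁, ← h₂]
    apply trace_mul_mono hT
    apply inv_sub_inv_posSemidef
    · exact hB₁.add_posSemidef (smul_one_posSemidef hs)
    · exact hB₂.add_posSemidef (smul_one_posSemidef hs)
    · have : B₂ + (s : ℂ) • 1 - (B₁ + (s : ℂ) • 1) = B₂ - B₁ := by abel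
      rw [this]
      exact hle
  rcases eq_or_lt_of_le ht1 with rfl | htlt
  · -- t = 1 case
    have h₁ : ∑ i, c i * μ₁ i ^ (-(1:ℝ)) = ∑ i, c i * (μ₁ i + 0)⁻¹ := by
      congr 1; ext i; rw [Real.rpow_neg_one, add_zero]
    have h₂ : ∑ i, e i * μ₂ i ^ (-(1:ℝ)) = ∑ i, e i * (μ₂ i + 0)⁻¹ := by
      congr 1; ext i; rw [Real.rpow_neg_one, add_zero]
    rw [h₁, h₂]
    exact hmono 0 le_rfl
  · -- t < 1 : integral argument
    set κ := ∫ s in Ioi (0:ℝ), s ^ (-t) * (1 + s)⁻¹ with hκdef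
    have hκ : 0 < κ := kappa_pos ht0 htlt
    have hint : ∀ (v : N → ℝ) (μ : N → ℝ), (∀ i, 0 < μ i) →
        ∫ s in Ioi (0:ℝ), (∑ i, v i * (s ^ (-t) * (μ i + s)⁻¹))
          = κ * ∑ i, v i * μ i ^ (-t) := by
      intro v μ hμ
      rw [integral_finset_sum]
      · rw [Finset.mul_sum]
        congr 1; ext i
        rw [MeasureTheory.integral_const_mul, integral_aux (hμ i)]
        ring
      · intro i _
        exact ((integrableOn_aux ht0 htlt (hμ i)).const_mul (v i))
    have hI₁ := hint c μ₁ hμ₁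
    have hI₂ := hint e μ₂ hμ₂
    have hineq : ∫ s in Ioi (0:ℝ), (∑ i, e i * (s ^ (-t) * (μ₂ i + s)⁻¹))
        ≤ ∫ s in Ioi (0:ℝ), (∑ i, c i * (s ^ (-t) * (μ₁ i + s)⁻¹)) := by
      apply integral_mono_ae
      · exact integrable_finset_sum _ (fun i _ => (integrableOn_aux ht0 htlt (hμ₂ i)).const_mul _)
      · exact integrable_finset_sum _ (fun i _ => (integrableOn_aux ht0 htlt (hμ₁ i)).const_mul _)
      · filter_upwards [ae_restrict_mem measurableSet_Ioi] with s hs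
        have hs0 : (0:ℝ) < s := hs
        have hrw : ∀ (v : N → ℝ) (μ : N → ℝ),
            ∑ i, v i * (s ^ (-t) * (μ i + s)⁻¹) = s ^ (-t) * ∑ i, v i * (μ i + s)⁻¹ := by
          intro v μ
          rw [Finset.mul_sum]
          congr 1; ext i; ring
        rw [hrw, hrw]
        exact mul_le_mul_of_nonneg_left (hmono s hs0.le) (rpow_nonneg hs0.le _)
    rw [hI₁, hI₂] at hineq
    exact le_of_mul_le_mul_left hineq hκ



section FunCalc
variable {N : Type*} [Fintype N] [DecidableEq N]
set_option linter.unusedSectionVars false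

lemma mpow_eq {A : Matrix N N ℂ} (hA : A.IsHermitian) (r : ℝ) :
    mpow A r = (hA.eigenvectorUnitary : Matrix N N ℂ) *
      Matrix.diagonal (fun i => ((hA.eigenvalues i ^ r : ℝ) : ℂ)) *
      star (hA.eigenvectorUnitary : Matrix N N ℂ) := by
  rw [mpow, funCalc, dif_pos hA]

lemma spectral' {A : Matrix N N ℂ} (hA : A.IsHermitian) :
    A = (hA.eigenvectorUnitary : Matrix N N ℂ) *
      Matrix.diagonal (fun i => ((hA.eigenvalues i : ℝ) : ℂ)) *
      star (hA.eigenvectorUnitary : Matrix N N ℂ) := by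
  have h := hA.spectral_theorem
  rw [Unitary.conjStarAlgAut_apply] at h
  exact h

lemma eigU_mul_star {A : Matrix N N ℂ} (hA : A.IsHermitian) :
    (hA.eigenvectorUnitary : Matrix N N ℂ) * star (hA.eigenvectorUnitary : Matrix N N ℂ) = 1 :=
  Unitary.coe_mul_star_self hA.eigenvectorUnitary

lemma conj_trace_eq {W : Matrix N N ℂ} (hW' : star W * W = 1) (D : Matrix N N ℂ) :
    (W * D * star W).trace = D.trace := by
  rw [Matrix.trace_mul_cycle, hW', Matrix.one_mul]

end FunCalc

variable {a b : Type*} [Fintype a] [Fintype b] [DecidableEq a] [DecidableEq b]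
set_option linter.unusedSectionVars false

lemma ptraceB_trace (M : Matrix (a × b) (a × b) ℂ) : (ptraceB M).trace = M.trace := by
  simp [ptraceB, Matrix.trace, Matrix.diag, Fintype.sum_prod_type]

lemma ptraceB_isHermitian {M : Matrix (a × b) (a × b) ℂ} (hM : M.IsHermitian) :
    (ptraceB M).IsHermitian := by
  ext i j
  simp only [Matrix.conjTranspose_apply, ptraceB, Matrix.of_apply, star_sum]
  refine Finset.sum_congr rfl fun k _ => ?_
  have h := congrFun (congrFun hM.eq (i, k)) (j, k)
  rw [Matrix.conjTranspose_apply] at h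
  exact h

def embed (x : a → ℂ) (k : b) : (a × b) → ℂ := fun p => if p.2 = k then x p.1 else 0

lemma ptrace_quad (M : Matrix (a × b) (a × b) ℂ) (x : a → ℂ) :
    dotProduct (star x) ((ptraceB M) *ᵥ x)
      = ∑ k : b, dotProduct (star (embed x k)) (M *ᵥ (embed x k)) := by
  have hrhs : ∀ k, dotProduct (star (embed x k)) (M *ᵥ (embed x k))
      = ∑ i, ∑ j, star (x i) * (M (i,k) (j,k) * x j) := by
    intro k
    simp only [dotProduct, Matrix.mulVec, embed, Pi.star_apply, Fintype.sum_prod_type,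
      apply_ite (star : ℂ → ℂ), star_zero, ite_mul, zero_mul, mul_ite, mul_zero,
      Finset.sum_ite_eq', Finset.mem_univ, if_true, Finset.mul_sum, Finset.sum_ite_irrel,
      Finset.sum_const_zero]
  have hlhs : dotProduct (star x) ((ptraceB M) *ᵥ x)
      = ∑ i, ∑ j, ∑ k, star (x i) * (M (i,k) (j,k) * x j) := by
    simp only [dotProduct, Matrix.mulVec, ptraceB, Matrix.of_apply, Pi.star_apply,
      Finset.sum_mul, Finset.mul_sum]
  rw [hlhs]
  simp only [hrhs]
  calc ∑ i, ∑ j, ∑ k, star (x i) * (M (i,k) (j,k) * x j)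
      = ∑ i, ∑ k, ∑ j, star (x i) * (M (i,k) (j,k) * x j) :=
        Finset.sum_congr rfl fun i _ => Finset.sum_comm
    _ = ∑ k, ∑ i, ∑ j, star (x i) * (M (i,k) (j,k) * x j) := Finset.sum_comm

lemma ptraceB_trace_pair (M : Matrix (a × b) (a × b) ℂ) (X : Matrix a a ℂ) :
    ((ptraceB M) * X).trace = (M * (X ⊗ₖ (1 : Matrix b b ℂ))).trace := by
  have hlhs : ((ptraceB M) * X).trace = ∑ i, ∑ j, ∑ k, M (i,k) (j,k) * X j i := by
    simp only [Matrix.trace, Matrix.diag, Matrix.mul_apply, ptraceB, Matrix.of_apply,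
      Finset.sum_mul]
  have hrhs : (M * (X ⊗ₖ (1 : Matrix b b ℂ))).trace
      = ∑ i, ∑ k, ∑ j, M (i,k) (j,k) * X j i := by
    simp only [Matrix.trace, Matrix.diag, Matrix.mul_apply, Fintype.sum_prod_type,
      kroneckerMap_apply, Matrix.one_apply, mul_ite, mul_one, mul_zero, Finset.sum_ite_eq',
      Finset.mem_univ, if_true]
  rw [hlhs, hrhs]
  refine Finset.sum_congr rfl fun i _ => Finset.sum_comm

section MoreAux
variable {N : Type*} [Fintype N] [DecidableEq N]

lemma mpow_posSemidef {A : Matrix N N ℂ} (hA : A.PosSemidef) (r : ℝ) :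
    (mpow A r).PosSemidef := by
  rw [mpow_eq hA.1]
  exact unitary_conj_posSemidef (fun i => Real.rpow_nonneg (hA.eigenvalues_nonneg i) r)

lemma trace_mul_pos {T W : Matrix N N ℂ} {d : N → ℝ} (hT : T.PosSemidef)
    (htr : 0 < T.trace.re) (hW : W * star W = 1) (hd : ∀ i, 0 < d i) :
    0 < (T * (W * Matrix.diagonal (fun i => (d i : ℂ)) * star W)).trace.re := by
  rw [trace_conj_diag]
  set c : N → ℝ := fun i => ((star W * T * W) i i).re with hcdef
  have hc : ∀ i, 0 ≤ c i := by
    intro i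
    have h := hT.conjTranspose_mul_mul_same W
    rw [← Matrix.star_eq_conjTranspose] at h
    exact psd_diag_re_nonneg h i
  have hsum : ∑ i, c i = T.trace.re := by
    have h1 : (star W * T * W).trace = T.trace := by
      rw [Matrix.trace_mul_cycle, hW, Matrix.one_mul]
    have h2 := congrArg Complex.re h1
    rw [re_trace_eq_sum, re_trace_eq_sum] at h2
    rw [re_trace_eq_sum]
    exact h2
  obtain ⟨i0, _, hi0⟩ : ∃ i ∈ Finset.univ, 0 < c i := by
    by_contra h
    push_neg at h
    have : ∑ i, c i ≤ 0 := Finset.sum_nonpos (fun i hi => h i hi)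
    rw [hsum] at this
    linarith
  exact Finset.sum_pos' (fun i _ => mul_nonneg (hc i) (hd i).le)
    ⟨i0, Finset.mem_univ _, mul_pos hi0 (hd i0)⟩

end MoreAux

section KronAux
variable {a b : Type*} [Fintype a] [Fintype b] [DecidableEq a] [DecidableEq b]

lemma kron_star (V : Matrix a a ℂ) :
    star (V ⊗ₖ (1 : Matrix b b ℂ)) = star V ⊗ₖ (1 : Matrix b b ℂ) := by
  ext p q
  obtain ⟨i, k⟩ := p
  obtain ⟨j, l⟩ := q
  simp only [Matrix.star_eq_conjTranspose, Matrix.conjTranspose_apply, kroneckerMap_apply,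
    Matrix.one_apply, star_mul', apply_ite (star : ℂ → ℂ), star_one, star_zero]
  by_cases h : k = l
  · subst h; simp [mul_comm]
  · simp [h, Ne.symm h]

lemma diag_kron_one (g : a → ℂ) :
    (Matrix.diagonal g) ⊗ₖ (1 : Matrix b b ℂ) = Matrix.diagonal (fun p : a × b => g p.1) := by
  rw [← Matrix.diagonal_one, Matrix.diagonal_kronecker_diagonal]
  simp

lemma ptraceB_posSemidef {M : Matrix (a × b) (a × b) ℂ} (hM : M.PosSemidef) :
    (ptraceB M).PosSemidef :=
  Matrix.PosSemidef.of_dotProduct_mulVec_nonneg (ptraceB_isHermitian hM.1) fun x => by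
    rw [ptrace_quad]
    exact Finset.sum_nonneg fun k _ => hM.dotProduct_mulVec_nonneg _

lemma ptraceB_posDef [Nonempty b] {M : Matrix (a × b) (a × b) ℂ} (hM : M.PosDef) :
    (ptraceB M).PosDef := by
  refine Matrix.PosDef.of_dotProduct_mulVec_pos (ptraceB_isHermitian hM.1) fun x hx => ?_
  rw [ptrace_quad]
  have k0 : b := Classical.arbitrary b
  have hx0 : embed x k0 ≠ 0 := by
    intro h
    apply hx
    ext i
    have := congrFun h (i, k0)
    simpa [embed] using this
  exact Finset.sum_pos' (fun k _ => hM.posSemidef.dotProduct_mulVec_nonneg _)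
    ⟨k0, Finset.mem_univ _, hM.dotProduct_mulVec_pos hx0⟩

end KronAux

end RenyiAux

theorem renyiRel_ge_marginal_bound {a b : Type*} [Fintype a] [Fintype b]
    [DecidableEq a] [DecidableEq b]
    (ρ σ : Matrix (a × b) (a × b) ℂ) (hρ : IsDensity ρ) (hσ : IsDensity σ)
    (hsep : IsSepState σ) (hσpd : σ.PosDef)
    (hle : (ptraceB σ ⊗ₖ (1 : Matrix b b ℂ) - σ).PosSemidef)
    (α : ℝ) (hα1 : 1 < α) (hα2 : α ≤ 2) :
    (1 / (α - 1)) * Real.logb 2 ((ptraceB (mpow ρ α) * mpow (ptraceB σ) (1 - α)).trace.re)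
      ≤ renyiRel α ρ σ := by
  classical
  -- nonemptiness of b
  have hne : Nonempty (a × b) := by
    by_contra h
    rw [not_nonempty_iff] at h
    have h0 : σ.trace = 0 := by simp [Matrix.trace]
    rw [hσ.2] at h0
    exact one_ne_zero h0
  have hb : Nonempty b := ⟨(Classical.arbitrary (a × b)).2⟩
  -- parameters
  set t : ℝ := α - 1 with htdef
  have ht0 : 0 < t := by simp only [htdef]; linarith
  have ht1 : t ≤ 1 := by simp only [htdef]; linarith
  have h1mα : 1 - α = -t := by simp only [htdef]; ring
  -- σ spectral data
  have hσH : σ.IsHermitian := hσpd.1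
  set U : Matrix (a × b) (a × b) ℂ := (hσH.eigenvectorUnitary : Matrix (a × b) (a × b) ℂ)
    with hUdef
  set μ : (a × b) → ℝ := hσH.eigenvalues with hμdef
  have hμpos : ∀ i, 0 < μ i := hσpd.eigenvalues_pos
  have hU : U * star U = 1 := RenyiAux.eigU_mul_star hσH
  -- σA spectral data
  have hσApd : (ptraceB σ).PosDef := RenyiAux.ptraceB_posDef hσpd
  have hσAH : (ptraceB σ).IsHermitian := hσApd.1
  set V : Matrix a a ℂ := (hσAH.eigenvectorUnitary : Matrix a a ℂ) with hVdef
  set ν : a → ℝ := hσAH.eigenvalues with hνdef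
  have hνpos : ∀ i, 0 < ν i := hσApd.eigenvalues_pos
  have hV : V * star V = 1 := RenyiAux.eigU_mul_star hσAH
  have hVk : (V ⊗ₖ (1 : Matrix b b ℂ)) * star (V ⊗ₖ (1 : Matrix b b ℂ)) = 1 := by
    rw [RenyiAux.kron_star, ← Matrix.mul_kronecker_mul, hV, Matrix.one_mul,
      Matrix.one_kronecker_one]
  -- T = ρ^α
  have hT : (mpow ρ α).PosSemidef := RenyiAux.mpow_posSemidef hρ.1 α
  -- trace of T is positive
  have hTtr : 0 < (mpow ρ α).trace.re := by
    have hρH : ρ.IsHermitian := hρ.1.1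
    set lam : (a × b) → ℝ := hρH.eigenvalues with hlamdef
    have hlam0 : ∀ i, 0 ≤ lam i := hρ.1.eigenvalues_nonneg
    have hU' : star (hρH.eigenvectorUnitary : Matrix (a × b) (a × b) ℂ) *
        (hρH.eigenvectorUnitary : Matrix (a × b) (a × b) ℂ) = 1 :=
      mul_eq_one_comm.mp (RenyiAux.eigU_mul_star hρH)
    have htr : (mpow ρ α).trace.re = ∑ i, lam i ^ α := by
      rw [RenyiAux.mpow_eq hρH, RenyiAux.conj_trace_eq hU', Matrix.trace_diagonal]
      rw [Complex.re_sum]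
      simp [hlamdef]
    have hsum1 : ∑ i, lam i = 1 := by
      have h1 : ρ.trace = ∑ i, ((lam i : ℝ) : ℂ) := by
        conv_lhs => rw [RenyiAux.spectral' hρH]
        rw [RenyiAux.conj_trace_eq hU', Matrix.trace_diagonal]
      rw [hρ.2] at h1
      have h2 := congrArg Complex.re h1
      rw [Complex.re_sum] at h2
      simpa using h2.symm
    obtain ⟨i0, _, hi0⟩ : ∃ i ∈ Finset.univ, 0 < lam i := by
      by_contra h
      push_neg at h
      have : ∑ i, lam i ≤ 0 := Finset.sum_nonpos (fun i hi => h i hi)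
      rw [hsum1] at this
      linarith
    rw [htr]
    exact Finset.sum_pos' (fun i _ => Real.rpow_nonneg (hlam0 i) α)
      ⟨i0, Finset.mem_univ _, Real.rpow_pos_of_pos hi0 α⟩
  -- goal massage
  rw [renyiRel, h1mα]
  have hfrac : 0 ≤ 1 / (α - 1) := by
    have : 0 < α - 1 := by linarith
    positivity
  apply mul_le_mul_of_nonneg_left _ hfrac
  apply Real.logb_le_logb_of_le one_lt_two
  · -- positivity of LHS trace
    rw [RenyiAux.mpow_eq hσAH]
    exact RenyiAux.trace_mul_pos (RenyiAux.ptraceB_posSemidef hT)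
      (by rwa [RenyiAux.ptraceB_trace]) hV
      (fun i => Real.rpow_pos_of_pos (hνpos i) (-t))
  · -- main inequality
    have hXeq : (V ⊗ₖ (1 : Matrix b b ℂ)) *
          Matrix.diagonal (fun p : a × b => ((ν p.1 ^ (-t) : ℝ) : ℂ)) *
          star (V ⊗ₖ (1 : Matrix b b ℂ))
        = (mpow (ptraceB σ) (-t)) ⊗ₖ (1 : Matrix b b ℂ) := by
      rw [RenyiAux.kron_star,
        show Matrix.diagonal (fun p : a × b => ((ν p.1 ^ (-t) : ℝ) : ℂ))
          = (Matrix.diagonal (fun i => ((ν i ^ (-t) : ℝ) : ℂ))) ⊗ₖ (1 : Matrix b b ℂ) from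
          (RenyiAux.diag_kron_one (fun i => ((ν i ^ (-t) : ℝ) : ℂ))).symm,
        ← Matrix.mul_kronecker_mul, ← Matrix.mul_kronecker_mul, Matrix.one_mul, Matrix.mul_one,
        RenyiAux.mpow_eq hσAH]
    have hB₂eq : (V ⊗ₖ (1 : Matrix b b ℂ)) *
          Matrix.diagonal (fun p : a × b => ((ν p.1 : ℝ) : ℂ)) *
          star (V ⊗ₖ (1 : Matrix b b ℂ))
        = (ptraceB σ) ⊗ₖ (1 : Matrix b b ℂ) := by
      rw [RenyiAux.kron_star,
        show Matrix.diagonal (fun p : a × b => ((ν p.1 : ℝ) : ℂ))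
          = (Matrix.diagonal (fun i => ((ν i : ℝ) : ℂ))) ⊗ₖ (1 : Matrix b b ℂ) from
          (RenyiAux.diag_kron_one (fun i => ((ν i : ℝ) : ℂ))).symm,
        ← Matrix.mul_kronecker_mul, ← Matrix.mul_kronecker_mul, Matrix.one_mul, Matrix.mul_one,
        ← RenyiAux.spectral' hσAH]
    have hlekey : ((V ⊗ₖ (1 : Matrix b b ℂ)) *
          Matrix.diagonal (fun p : a × b => ((ν p.1 : ℝ) : ℂ)) *
          star (V ⊗ₖ (1 : Matrix b b ℂ))
        - U * Matrix.diagonal (fun i => ((μ i : ℝ) : ℂ)) * star U).PosSemidef := by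
      rw [hB₂eq, ← RenyiAux.spectral' hσH]
      exact hle
    have hkey := RenyiAux.key_ineq (mpow ρ α) U (V ⊗ₖ (1 : Matrix b b ℂ)) μ
      (fun p => ν p.1) hT hU hVk hμpos (fun p => hνpos p.1) hlekey t ht0 ht1
    rw [hXeq] at hkey
    calc (ptraceB (mpow ρ α) * mpow (ptraceB σ) (-t)).trace.re
        = ((mpow ρ α) * ((mpow (ptraceB σ) (-t)) ⊗ₖ (1 : Matrix b b ℂ))).trace.re := by
          rw [RenyiAux.ptraceB_trace_pair]
      _ ≤ ((mpow ρ α) * (U * Matrix.diagonal (fun i => ((μ i ^ (-t) : ℝ) : ℂ)) * star U)).trace.re := hkey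
      _ = ((mpow ρ α) * mpow σ (-t)).trace.re := by rw [← RenyiAux.mpow_eq hσH]
end

section
/- (van Dam–Hayden inequality) Let ρ and σ be density matrices with fidelity F(ρ,σ) ≥ F > 0, and let α ∈ (1/2, 1), β = α/(2α−1). Then S_α(ρ) ≥ S_β(σ) + (2α/(1−α)) log F, where S_γ(τ) = (1/(1−γ)) log Tr(τ^γ). -/
open Matrix BigOperators Kronecker ComplexOrder

section helpers
variable {n : Type*} [Fintype n] [DecidableEq n]

lemma funCalc_eq {A : Matrix n n ℂ} (hA : A.IsHermitian) (f : ℝ → ℝ) :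
    funCalc f A = (hA.eigenvectorUnitary : Matrix n n ℂ) *
      Matrix.diagonal (fun i => (f (hA.eigenvalues i) : ℂ)) *
      star (hA.eigenvectorUnitary : Matrix n n ℂ) := dif_pos hA

lemma eigUnit_star_mul {A : Matrix n n ℂ} (hA : A.IsHermitian) :
    star (hA.eigenvectorUnitary : Matrix n n ℂ) * (hA.eigenvectorUnitary : Matrix n n ℂ) = 1 :=
  Matrix.mem_unitaryGroup_iff'.mp (hA.eigenvectorUnitary).2

lemma eigUnit_mul_star {A : Matrix n n ℂ} (hA : A.IsHermitian) :
    (hA.eigenvectorUnitary : Matrix n n ℂ) * star (hA.eigenvectorUnitary : Matrix n n ℂ) = 1 :=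
  Matrix.mem_unitaryGroup_iff.mp (hA.eigenvectorUnitary).2

lemma funCalc_mul_funCalc {A : Matrix n n ℂ} (hA : A.IsHermitian) (f g h : ℝ → ℝ)
    (hfg : ∀ i, f (hA.eigenvalues i) * g (hA.eigenvalues i) = h (hA.eigenvalues i)) :
    funCalc f A * funCalc g A = funCalc h A := by
  rw [funCalc_eq hA, funCalc_eq hA, funCalc_eq hA]
  set V := (hA.eigenvectorUnitary : Matrix n n ℂ)
  calc V * Matrix.diagonal (fun i => (f (hA.eigenvalues i) : ℂ)) * star V *
        (V * Matrix.diagonal (fun i => (g (hA.eigenvalues i) : ℂ)) * star V)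
      = V * (Matrix.diagonal (fun i => (f (hA.eigenvalues i) : ℂ)) * ((star V * V) *
          Matrix.diagonal (fun i => (g (hA.eigenvalues i) : ℂ)))) * star V := by
        simp only [Matrix.mul_assoc]
    _ = V * Matrix.diagonal (fun i => (h (hA.eigenvalues i) : ℂ)) * star V := by
        rw [eigUnit_star_mul hA, one_mul, Matrix.diagonal_mul_diagonal]
        have : (fun i => (f (hA.eigenvalues i) : ℂ) * (g (hA.eigenvalues i) : ℂ))
            = fun i => (h (hA.eigenvalues i) : ℂ) := by
          funext i
          rw [← Complex.ofReal_mul, hfg i]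
        rw [this]

lemma funCalc_isHermitian {A : Matrix n n ℂ} (hA : A.IsHermitian) (f : ℝ → ℝ) :
    (funCalc f A).IsHermitian := by
  rw [funCalc_eq hA, Matrix.star_eq_conjTranspose]
  have hd : (Matrix.diagonal (fun i => (f (hA.eigenvalues i) : ℂ))).IsHermitian := by
    rw [Matrix.IsHermitian, Matrix.diagonal_conjTranspose]
    have : (star fun i => ((f (hA.eigenvalues i) : ℂ))) = fun i => (f (hA.eigenvalues i) : ℂ) :=
      funext fun i => Complex.conj_ofReal _
    rw [this]
  exact Matrix.isHermitian_mul_mul_conjTranspose _ hd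

lemma funCalc_posSemidef {A : Matrix n n ℂ} (hA : A.IsHermitian) (f : ℝ → ℝ)
    (hf : ∀ i, 0 ≤ f (hA.eigenvalues i)) : (funCalc f A).PosSemidef := by
  rw [funCalc_eq hA]
  rw [Matrix.star_eq_conjTranspose]
  exact (Matrix.posSemidef_diagonal_iff.mpr fun i =>
    Complex.zero_le_real.mpr (hf i)).mul_mul_conjTranspose_same _

lemma funCalc_trace {A : Matrix n n ℂ} (hA : A.IsHermitian) (f : ℝ → ℝ) :
    (funCalc f A).trace = ∑ i, (f (hA.eigenvalues i) : ℂ) := by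
  rw [funCalc_eq hA, Matrix.trace_mul_cycle, eigUnit_star_mul hA, one_mul,
    Matrix.trace_diagonal]

lemma funCalc_trace_re {A : Matrix n n ℂ} (hA : A.IsHermitian) (f : ℝ → ℝ) :
    (funCalc f A).trace.re = ∑ i, f (hA.eigenvalues i) := by
  rw [funCalc_trace hA, Complex.re_sum]
  simp

lemma funCalc_self {A : Matrix n n ℂ} (hA : A.IsHermitian) (f : ℝ → ℝ)
    (hf : ∀ i, f (hA.eigenvalues i) = hA.eigenvalues i) : funCalc f A = A := by
  rw [funCalc_eq hA]
  conv_rhs => rw [hA.spectral_theorem]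
  have : (fun i => (f (hA.eigenvalues i) : ℂ)) = Complex.ofReal ∘ hA.eigenvalues := by
    funext i
    simp [hf i, Function.comp]
  rw [this]
  rfl

end helpers

section helpers2
variable {n : Type*} [Fintype n] [DecidableEq n]

lemma trace_conjTranspose_mul_re (Z : Matrix n n ℂ) :
    (Zᴴ * Z).trace.re = ∑ p : n × n, ‖Z p.1 p.2‖ ^ 2 := by
  rw [Matrix.trace, Complex.re_sum, Fintype.sum_prod_type]
  rw [Finset.sum_comm]
  refine Finset.sum_congr rfl fun k _ => ?_
  rw [Matrix.diag_apply, Matrix.mul_apply, Complex.re_sum]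
  refine Finset.sum_congr rfl fun i _ => ?_
  rw [Matrix.conjTranspose_apply]
  have : star (Z i k) * Z i k = ((‖Z i k‖ ^ 2 : ℝ) : ℂ) := by
    rw [mul_comm, RCLike.star_def, Complex.mul_conj, Complex.normSq_eq_norm_sq]
  rw [this, Complex.ofReal_re]

lemma cs_frob (X Y : Matrix n n ℂ) :
    (Xᴴ * Y).trace.re ≤ Real.sqrt (((Xᴴ * X).trace.re) * ((Yᴴ * Y).trace.re)) := by
  have h2 : (Xᴴ * Y).trace.re ≤
      ∑ p : n × n, ‖X p.1 p.2‖ * ‖Y p.1 p.2‖ := by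
    rw [Matrix.trace, Complex.re_sum, Fintype.sum_prod_type, Finset.sum_comm]
    refine Finset.sum_le_sum fun k _ => ?_
    rw [Matrix.diag_apply, Matrix.mul_apply, Complex.re_sum]
    refine Finset.sum_le_sum fun i _ => ?_
    calc (Xᴴ k i * Y i k).re ≤ ‖Xᴴ k i * Y i k‖ := Complex.re_le_norm _
      _ = ‖X i k‖ * ‖Y i k‖ := by
          rw [norm_mul, Matrix.conjTranspose_apply, RCLike.star_def, Complex.norm_conj]
  refine h2.trans ?_
  rw [trace_conjTranspose_mul_re X, trace_conjTranspose_mul_re Y]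
  have h3 := Finset.sum_mul_sq_le_sq_mul_sq Finset.univ
    (fun p : n × n => ‖X p.1 p.2‖) (fun p : n × n => ‖Y p.1 p.2‖)
  have h4 : 0 ≤ ∑ p : n × n, ‖X p.1 p.2‖ * ‖Y p.1 p.2‖ :=
    Finset.sum_nonneg fun p _ => mul_nonneg (norm_nonneg _) (norm_nonneg _)
  calc ∑ p : n × n, ‖X p.1 p.2‖ * ‖Y p.1 p.2‖
      = Real.sqrt ((∑ p : n × n, ‖X p.1 p.2‖ * ‖Y p.1 p.2‖) ^ 2) :=
        (Real.sqrt_sq h4).symm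
    _ ≤ _ := Real.sqrt_le_sqrt h3

lemma psd_trace_re_nonneg {P : Matrix n n ℂ} (hP : P.PosSemidef) : 0 ≤ P.trace.re := by
  rw [Matrix.trace, Complex.re_sum]
  refine Finset.sum_nonneg fun i _ => ?_
  exact (Complex.le_def.mp hP.diag_nonneg).1

lemma unitary_row_sum {K : Matrix n n ℂ} (h : K * Kᴴ = 1) (i : n) :
    ∑ j, Complex.normSq (K i j) = 1 := by
  have := congrArg (fun M : Matrix n n ℂ => (M i i).re) h
  simp only [Matrix.mul_apply, Matrix.one_apply_eq, Complex.one_re] at this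
  rw [← this, Complex.re_sum]
  refine Finset.sum_congr rfl fun j _ => ?_
  rw [Matrix.conjTranspose_apply]
  have h2 : K i j * star (K i j) = ((Complex.normSq (K i j) : ℝ) : ℂ) := by
    rw [RCLike.star_def, Complex.mul_conj]
  rw [h2, Complex.ofReal_re]

lemma unitary_col_sum {K : Matrix n n ℂ} (h : Kᴴ * K = 1) (j : n) :
    ∑ i, Complex.normSq (K i j) = 1 := by
  have := congrArg (fun M : Matrix n n ℂ => (M j j).re) h
  simp only [Matrix.mul_apply, Matrix.one_apply_eq, Complex.one_re] at this
  rw [← this, Complex.re_sum]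
  refine Finset.sum_congr rfl fun i _ => ?_
  rw [Matrix.conjTranspose_apply]
  have h2 : star (K i j) * K i j = ((Complex.normSq (K i j) : ℝ) : ℂ) := by
    rw [mul_comm, RCLike.star_def, Complex.mul_conj]
  rw [h2, Complex.ofReal_re]

lemma holder_w {ι : Type*} [Fintype ι] (μ f g : ι → ℝ) (hμ : ∀ i, 0 ≤ μ i)
    (hf : ∀ i, 0 ≤ f i) (hg : ∀ i, 0 ≤ g i) {p q : ℝ} (hpq : p.HolderConjugate q) :
    ∑ i, μ i * (f i * g i) ≤
      (∑ i, μ i * f i ^ p) ^ (1 / p) * (∑ i, μ i * g i ^ q) ^ (1 / q) := by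
  have key := Real.inner_le_Lp_mul_Lq_of_nonneg (s := Finset.univ)
    (f := fun i => μ i ^ (1/p) * f i) (g := fun i => μ i ^ (1/q) * g i) hpq
    (fun i _ => mul_nonneg (Real.rpow_nonneg (hμ i) _) (hf i))
    (fun i _ => mul_nonneg (Real.rpow_nonneg (hμ i) _) (hg i))
  have e1 : ∀ i, (μ i ^ (1/p) * f i) * (μ i ^ (1/q) * g i) = μ i * (f i * g i) := by
    intro i
    have : μ i ^ (1/p) * μ i ^ (1/q) = μ i := by
      have hs : 1/p + 1/q = 1 := by
        rw [one_div, one_div]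
        exact hpq.inv_add_inv_eq_one
      rw [← Real.rpow_add' (hμ i) (by rw [hs]; norm_num), hs]
      exact Real.rpow_one _
    calc (μ i ^ (1/p) * f i) * (μ i ^ (1/q) * g i)
        = (μ i ^ (1/p) * μ i ^ (1/q)) * (f i * g i) := by ring
      _ = μ i * (f i * g i) := by rw [this]
  have e2 : ∀ i, (μ i ^ (1/p) * f i) ^ p = μ i * f i ^ p := by
    intro i
    rw [Real.mul_rpow (Real.rpow_nonneg (hμ i) _) (hf i), ← Real.rpow_mul (hμ i),
      one_div_mul_cancel hpq.ne_zero, Real.rpow_one]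
  have e3 : ∀ i, (μ i ^ (1/q) * g i) ^ q = μ i * g i ^ q := by
    intro i
    rw [Real.mul_rpow (Real.rpow_nonneg (hμ i) _) (hg i), ← Real.rpow_mul (hμ i),
      one_div_mul_cancel hpq.symm.ne_zero, Real.rpow_one]
  simpa only [e1, e2, e3] using key

end helpers2

section helpers3
variable {n : Type*} [Fintype n] [DecidableEq n]

lemma trace_mul_conj_pair (U1 U2 : Matrix n n ℂ) (d e : n → ℝ) :
    ((U1 * Matrix.diagonal (fun i => (d i : ℂ)) * U1ᴴ) *
      (U2 * Matrix.diagonal (fun j => (e j : ℂ)) * U2ᴴ)).trace.re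
    = ∑ i, ∑ j, d i * e j * Complex.normSq ((U1ᴴ * U2) i j) := by
  set K := U1ᴴ * U2 with hK
  set D := Matrix.diagonal (fun i => (d i : ℂ)) with hD
  set E := Matrix.diagonal (fun j => (e j : ℂ)) with hE
  have h1 : (U1 * D * U1ᴴ) * (U2 * E * U2ᴴ) = (U1 * D) * ((U1ᴴ * (U2 * E * U2ᴴ))) := by
    simp only [Matrix.mul_assoc]
  have h2 : ((U1 * D * U1ᴴ) * (U2 * E * U2ᴴ)).trace = ((K * E * Kᴴ) * D).trace := by
    rw [h1, Matrix.trace_mul_comm]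
    congr 1
    rw [hK, Matrix.conjTranspose_mul, Matrix.conjTranspose_conjTranspose]
    simp only [Matrix.mul_assoc]
  rw [h2, Matrix.trace, Complex.re_sum]
  refine Finset.sum_congr rfl fun i _ => ?_
  rw [Matrix.diag_apply, Matrix.mul_diagonal, Matrix.mul_apply, Finset.sum_mul, Complex.re_sum]
  refine Finset.sum_congr rfl fun j _ => ?_
  rw [Matrix.mul_diagonal, Matrix.conjTranspose_apply]
  have h3 : K i j * (e j : ℂ) * star (K i j) * (d i : ℂ)
      = ((d i * e j * Complex.normSq (K i j) : ℝ) : ℂ) := by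
    have h4 : K i j * star (K i j) = ((Complex.normSq (K i j) : ℝ) : ℂ) := by
      rw [RCLike.star_def, Complex.mul_conj]
    calc K i j * (e j : ℂ) * star (K i j) * (d i : ℂ)
        = (K i j * star (K i j)) * ((e j : ℂ) * (d i : ℂ)) := by ring
      _ = ((d i * e j * Complex.normSq (K i j) : ℝ) : ℂ) := by rw [h4]; push_cast; ring
  rw [h3, Complex.ofReal_re]

end helpers3


section helpers4
variable {n : Type*} [Fintype n] [DecidableEq n]

lemma funCalc_eq' {A : Matrix n n ℂ} (hA : A.IsHermitian) (f : ℝ → ℝ) :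
    funCalc f A = (hA.eigenvectorUnitary : Matrix n n ℂ) *
      Matrix.diagonal (fun i => (f (hA.eigenvalues i) : ℂ)) *
      (hA.eigenvectorUnitary : Matrix n n ℂ)ᴴ := by
  rw [funCalc_eq hA, Matrix.star_eq_conjTranspose]

lemma spectral_coe {A : Matrix n n ℂ} (hA : A.IsHermitian) :
    A = (hA.eigenvectorUnitary : Matrix n n ℂ) *
      Matrix.diagonal (fun i => ((hA.eigenvalues i : ℝ) : ℂ)) *
      (hA.eigenvectorUnitary : Matrix n n ℂ)ᴴ := by
  conv_lhs => rw [hA.spectral_theorem]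
  rw [Unitary.conjStarAlgAut_apply, Matrix.star_eq_conjTranspose]
  rfl

lemma eigUnit_hmul {A : Matrix n n ℂ} (hA : A.IsHermitian) :
    (hA.eigenvectorUnitary : Matrix n n ℂ)ᴴ * (hA.eigenvectorUnitary : Matrix n n ℂ) = 1 := by
  rw [← Matrix.star_eq_conjTranspose]; exact eigUnit_star_mul hA

lemma eigUnit_mulh {A : Matrix n n ℂ} (hA : A.IsHermitian) :
    (hA.eigenvectorUnitary : Matrix n n ℂ) * (hA.eigenvectorUnitary : Matrix n n ℂ)ᴴ = 1 := by
  rw [← Matrix.star_eq_conjTranspose]; exact eigUnit_mul_star hA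

lemma mpow_mul_mpow {τ : Matrix n n ℂ} (hτ : τ.PosSemidef) {s t : ℝ} (hst : s + t ≠ 0) :
    mpow τ s * mpow τ t = mpow τ (s + t) :=
  funCalc_mul_funCalc hτ.1 _ _ _ fun i => (Real.rpow_add' (hτ.eigenvalues_nonneg i) hst).symm

lemma mpow_one_eq {τ : Matrix n n ℂ} (hτ : τ.PosSemidef) : mpow τ 1 = τ :=
  funCalc_self hτ.1 _ fun i => Real.rpow_one _

lemma mpow_isHermitian {τ : Matrix n n ℂ} (hτ : τ.IsHermitian) (s : ℝ) :
    (mpow τ s).IsHermitian := funCalc_isHermitian hτ _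

lemma mpow_trace_re {τ : Matrix n n ℂ} (hτ : τ.IsHermitian) (s : ℝ) :
    (mpow τ s).trace.re = ∑ i, (hτ.eigenvalues i) ^ s := funCalc_trace_re hτ _

end helpers4


set_option maxHeartbeats 2000000 in
theorem vanDam_Hayden {n : Type*} [Fintype n] [DecidableEq n]
    (ρ σ : Matrix n n ℂ) (hρ : IsDensity ρ) (hσ : IsDensity σ)
    (F : ℝ) (hF : 0 < F) (hfid : F ≤ fid ρ σ)
    (α β : ℝ) (hα1 : 1 / 2 < α) (hα2 : α < 1) (hβ : β = α / (2 * α - 1)) :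
    renyiEntropy β σ + (2 * α / (1 - α)) * Real.logb 2 F ≤ renyiEntropy α ρ := by
  classical
  obtain ⟨hρP, hρtr⟩ := hρ
  obtain ⟨hσP, hσtr⟩ := hσ
  have hρH : ρ.IsHermitian := hρP.1
  have hσH : σ.IsHermitian := hσP.1
  have hα0 : 0 < α := by linarith
  have h1α : 0 < 1 - α := by linarith
  have h2α1 : 0 < 2 * α - 1 := by linarith
  have hβ1 : 1 < β := by rw [hβ, lt_div_iff₀ h2α1]; linarith
  have hβ0 : 0 < β := by linarith
  set a : n → ℝ := hρH.eigenvalues with ha_def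
  set b : n → ℝ := hσH.eigenvalues with hb_def
  have ha0 : ∀ i, 0 ≤ a i := fun i => hρP.eigenvalues_nonneg i
  have hb0 : ∀ j, 0 ≤ b j := fun j => hσP.eigenvalues_nonneg j
  have hsuma : ∑ i, a i = 1 := by
    have h1 : funCalc (fun x => x) ρ = ρ := funCalc_self hρH _ (fun i => rfl)
    have h2 := funCalc_trace_re hρH (fun x => x)
    rw [h1, hρtr] at h2
    simpa using h2.symm
  have hsumb : ∑ j, b j = 1 := by
    have h1 : funCalc (fun x => x) σ = σ := funCalc_self hσH _ (fun i => rfl)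
    have h2 := funCalc_trace_re hσH (fun x => x)
    rw [h1, hσtr] at h2
    simpa using h2.symm
  set TA : ℝ := ∑ i, (a i) ^ α with hTA_def
  set TS : ℝ := ∑ j, (b j) ^ β with hTS_def
  have hTA0 : 0 < TA := by
    obtain ⟨i0, hi0⟩ : ∃ i, 0 < a i := by
      by_contra hcon
      push_neg at hcon
      have : (∑ i, a i) ≤ 0 := Finset.sum_nonpos fun i _ => hcon i
      rw [hsuma] at this; linarith
    exact lt_of_lt_of_le (Real.rpow_pos_of_pos hi0 α)
      (Finset.single_le_sum (fun i _ => Real.rpow_nonneg (ha0 i) α) (Finset.mem_univ i0))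
  have hTS0 : 0 < TS := by
    obtain ⟨j0, hj0⟩ : ∃ j, 0 < b j := by
      by_contra hcon
      push_neg at hcon
      have : (∑ j, b j) ≤ 0 := Finset.sum_nonpos fun j _ => hcon j
      rw [hsumb] at this; linarith
    exact lt_of_lt_of_le (Real.rpow_pos_of_pos hj0 β)
      (Finset.single_le_sum (fun j _ => Real.rpow_nonneg (hb0 j) β) (Finset.mem_univ j0))
  -- matrices
  set Sq : Matrix n n ℂ := mpow σ (1/2) with hSq_def
  set Rr : Matrix n n ℂ := mpow ρ ((1-α)/2) with hRr_def
  set Aa : Matrix n n ℂ := mpow ρ (α/2) with hAa_def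
  set sqρ : Matrix n n ℂ := mpow ρ (1/2) with hsqρ_def
  have hSqH : Sq.IsHermitian := mpow_isHermitian hσH _
  have hRrH : Rr.IsHermitian := mpow_isHermitian hρH _
  have hAaH : Aa.IsHermitian := mpow_isHermitian hρH _
  have hsqρH : sqρ.IsHermitian := mpow_isHermitian hρH _
  have hSq2 : Sq * Sq = σ := by
    rw [hSq_def, mpow_mul_mpow hσP (by norm_num), show (1/2 + 1/2 : ℝ) = 1 by norm_num]
    exact mpow_one_eq hσP
  have hsqρ2 : sqρ * sqρ = ρ := by
    rw [hsqρ_def, mpow_mul_mpow hρP (by norm_num), show (1/2 + 1/2 : ℝ) = 1 by norm_num]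
    exact mpow_one_eq hρP
  have hAA : Aa * Aa = mpow ρ α := by
    rw [hAa_def, mpow_mul_mpow hρP (by intro hcc; apply hα0.ne'; linarith),
      show α/2 + α/2 = α by ring]
  have hRR : Rr * Rr = mpow ρ (1-α) := by
    rw [hRr_def, mpow_mul_mpow hρP (by intro hcc; apply h1α.ne'; linarith),
      show (1-α)/2 + (1-α)/2 = 1-α by ring]
  have hAR : Aa * Rr = sqρ := by
    rw [hAa_def, hRr_def, hsqρ_def, mpow_mul_mpow hρP (by intro hcc; linarith),
      show α/2 + (1-α)/2 = 1/2 by ring]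
  set Bb : Matrix n n ℂ := Rr * Sq with hBb_def
  set Cc : Matrix n n ℂ := sqρ * Sq with hCc_def
  have hCAB : Cc = Aa * Bb := by
    rw [hCc_def, hBb_def, ← hAR, Matrix.mul_assoc]
  set Mm : Matrix n n ℂ := mpow σ (1/2) * ρ * mpow σ (1/2) with hMm_def
  have hMmCC : Mm = Ccᴴ * Cc := by
    rw [hMm_def, ← hSq_def, hCc_def, Matrix.conjTranspose_mul, hSqH.eq, hsqρH.eq]
    calc Sq * ρ * Sq = Sq * (sqρ * sqρ) * Sq := by rw [hsqρ2]
      _ = Sq * sqρ * (sqρ * Sq) := by simp only [Matrix.mul_assoc]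
  have hMmP : Mm.PosSemidef := by
    rw [hMmCC]; exact Matrix.posSemidef_conjTranspose_mul_self Cc
  have hMmH : Mm.IsHermitian := hMmP.1
  set m : n → ℝ := hMmH.eigenvalues with hm_def
  have hm0 : ∀ k, 0 ≤ m k := fun k => hMmP.eigenvalues_nonneg k
  set Vd : Matrix n n ℂ := (hMmH.eigenvectorUnitary : Matrix n n ℂ) with hVd_def
  have hVV : Vdᴴ * Vd = 1 := eigUnit_hmul hMmH
  have hVV' : Vd * Vdᴴ = 1 := eigUnit_mulh hMmH
  set G : Matrix n n ℂ := Cc * Vd with hG_def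
  have hGG : Gᴴ * G = Matrix.diagonal (fun k => ((m k : ℝ) : ℂ)) := by
    have hs : Vdᴴ * Mm * Vd = Matrix.diagonal (fun k => ((m k : ℝ) : ℂ)) := by
      conv_lhs => rw [spectral_coe hMmH]
      calc (Vdᴴ * (Vd * Matrix.diagonal (fun k => ((m k : ℝ) : ℂ)) * Vdᴴ)) * Vd
          = (Vdᴴ * Vd) * Matrix.diagonal (fun k => ((m k : ℝ) : ℂ)) * (Vdᴴ * Vd) := by
            simp only [Matrix.mul_assoc]
        _ = Matrix.diagonal (fun k => ((m k : ℝ) : ℂ)) := by rw [hVV, one_mul, mul_one]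
    calc Gᴴ * G = Vdᴴ * (Ccᴴ * Cc) * Vd := by
          rw [hG_def, Matrix.conjTranspose_mul]; simp only [Matrix.mul_assoc]
      _ = Vdᴴ * Mm * Vd := by rw [← hMmCC]
      _ = _ := hs
  set cc : n → ℝ := fun k => if m k = 0 then 0 else (m k) ^ (-(1/2) : ℝ) with hcc_def
  set Wm : Matrix n n ℂ := G * Matrix.diagonal (fun k => ((cc k : ℝ) : ℂ)) with hWm_def
  have hdiagstar : (Matrix.diagonal (fun k => ((cc k : ℝ) : ℂ)))ᴴ
      = Matrix.diagonal (fun k => ((cc k : ℝ) : ℂ)) := by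
    rw [Matrix.diagonal_conjTranspose]
    have : (star fun k => ((cc k : ℝ) : ℂ)) = fun k => ((cc k : ℝ) : ℂ) :=
      funext fun k => Complex.conj_ofReal _
    rw [this]
  have hccmul : ∀ k, cc k * m k = (m k) ^ ((1:ℝ)/2) := by
    intro k
    by_cases hk : m k = 0
    · rw [hcc_def]
      simp only [hk, if_pos rfl]
      rw [Real.zero_rpow (by norm_num : ((1:ℝ)/2) ≠ 0)]
      simp
    · have hkpos : 0 < m k := lt_of_le_of_ne (hm0 k) (Ne.symm hk)
      simp only [hcc_def, if_neg hk]
      nth_rewrite 2 [← Real.rpow_one (m k)]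
      rw [← Real.rpow_add hkpos]
      norm_num
  have hccsq : ∀ k, cc k * m k * cc k = (if m k = 0 then (0:ℝ) else 1) := by
    intro k
    by_cases hk : m k = 0
    · simp [hcc_def, hk]
    · have hkpos : 0 < m k := lt_of_le_of_ne (hm0 k) (Ne.symm hk)
      rw [hccmul k]
      simp only [hcc_def, if_neg hk]
      rw [← Real.rpow_add hkpos]
      norm_num
  have hWG : Wmᴴ * G = Matrix.diagonal (fun k => (((m k) ^ ((1:ℝ)/2) : ℝ) : ℂ)) := by
    rw [hWm_def, Matrix.conjTranspose_mul, hdiagstar, Matrix.mul_assoc, hGG,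
      Matrix.diagonal_mul_diagonal]
    refine congrArg _ (funext fun k => ?_)
    rw [← Complex.ofReal_mul, hccmul k]
  have hWW : Wmᴴ * Wm
      = Matrix.diagonal (fun k => (((if m k = 0 then (0:ℝ) else 1) : ℝ) : ℂ)) := by
    rw [hWm_def, Matrix.conjTranspose_mul, hdiagstar]
    calc (Matrix.diagonal (fun k => ((cc k : ℝ) : ℂ)) * Gᴴ) *
          (G * Matrix.diagonal (fun k => ((cc k : ℝ) : ℂ)))
        = Matrix.diagonal (fun k => ((cc k : ℝ) : ℂ)) * (Gᴴ * G) *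
            Matrix.diagonal (fun k => ((cc k : ℝ) : ℂ)) := by simp only [Matrix.mul_assoc]
      _ = _ := by
          rw [hGG, Matrix.diagonal_mul_diagonal, Matrix.diagonal_mul_diagonal]
          refine congrArg _ (funext fun k => ?_)
          rw [← Complex.ofReal_mul, ← Complex.ofReal_mul, hccsq k]
  have hWind : Wm * Matrix.diagonal (fun k => (((if m k = 0 then (0:ℝ) else 1) : ℝ) : ℂ))
      = Wm := by
    rw [hWm_def, Matrix.mul_assoc, Matrix.diagonal_mul_diagonal]
    refine congrArg _ (congrArg _ (funext fun k => ?_))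
    rw [← Complex.ofReal_mul]
    congr 1
    by_cases hk : m k = 0
    · simp [hcc_def, hk]
    · simp [hcc_def, hk]
  set Q : Matrix n n ℂ := Wm * Wmᴴ with hQ_def
  have hQQ : Q * Q = Q := by
    rw [hQ_def]
    calc (Wm * Wmᴴ) * (Wm * Wmᴴ) = Wm * (Wmᴴ * Wm) * Wmᴴ := by simp only [Matrix.mul_assoc]
      _ = Wm * Wmᴴ := by rw [hWW, hWind]
  have hQH : Qᴴ = Q := by
    rw [hQ_def, Matrix.conjTranspose_mul, Matrix.conjTranspose_conjTranspose]
  have h1Q : ((1 : Matrix n n ℂ) - Q).PosSemidef := by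
    have heq : (1 : Matrix n n ℂ) - Q = ((1 : Matrix n n ℂ) - Q)ᴴ * ((1 : Matrix n n ℂ) - Q) := by
      rw [Matrix.conjTranspose_sub, Matrix.conjTranspose_one, hQH, Matrix.sub_mul,
        Matrix.mul_sub, Matrix.mul_sub]
      simp only [one_mul, mul_one]
      rw [hQQ]
      abel
    rw [heq]
    exact Matrix.posSemidef_conjTranspose_mul_self _
  -- fidelity as a sum
  have hfidsum : fid ρ σ = ∑ k, (m k) ^ ((1:ℝ)/2) := funCalc_trace_re hMmH (fun x => x ^ ((1:ℝ)/2))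
  have hWGsum : (Wmᴴ * G).trace.re = ∑ k, (m k) ^ ((1:ℝ)/2) := by
    rw [hWG, Matrix.trace_diagonal, Complex.re_sum]
    exact Finset.sum_congr rfl fun k _ => Complex.ofReal_re _
  have hGAB : G = Aa * (Bb * Vd) := by
    rw [hG_def, hCAB, Matrix.mul_assoc]
  have hsplit : (Aa * Wm)ᴴ * (Bb * Vd) = Wmᴴ * G := by
    rw [Matrix.conjTranspose_mul Aa Wm, hAaH.eq, hGAB]
    simp only [Matrix.mul_assoc]
  have hcs : fid ρ σ ≤ Real.sqrt ((((Aa * Wm)ᴴ * (Aa * Wm)).trace.re) *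
      (((Bb * Vd)ᴴ * (Bb * Vd)).trace.re)) := by
    rw [hfidsum, ← hWGsum, ← hsplit]
    exact cs_frob _ _
  have hT1 : ((Aa * Wm)ᴴ * (Aa * Wm)).trace.re ≤ TA := by
    have he1 : (Aa * Wm)ᴴ * (Aa * Wm) = Wmᴴ * ((Aa * Aa) * Wm) := by
      rw [Matrix.conjTranspose_mul, hAaH.eq]
      simp only [Matrix.mul_assoc]
    have he2 : (Wmᴴ * ((Aa * Aa) * Wm)).trace = ((Aa * Aa) * Q).trace := by
      rw [Matrix.trace_mul_comm, hQ_def]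
      simp only [Matrix.mul_assoc]
    have he3 : ((Aa * Aa) * ((1 : Matrix n n ℂ) - Q)).trace
        = (Aa * Aa).trace - ((Aa * Aa) * Q).trace := by
      rw [Matrix.mul_sub, mul_one, Matrix.trace_sub]
    have hpsd : 0 ≤ ((Aa * Aa) * ((1 : Matrix n n ℂ) - Q)).trace.re := by
      have he4 : ((Aa * Aa) * ((1 : Matrix n n ℂ) - Q)).trace
          = (Aa * ((1 : Matrix n n ℂ) - Q) * Aa).trace := by
        rw [Matrix.mul_assoc, Matrix.trace_mul_comm (Aa : Matrix n n ℂ)]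
      rw [he4]
      have hpsd2 : (Aa * ((1 : Matrix n n ℂ) - Q) * Aaᴴ).PosSemidef :=
        h1Q.mul_mul_conjTranspose_same Aa
      rw [hAaH.eq] at hpsd2
      exact psd_trace_re_nonneg hpsd2
    have htras : (Aa * Aa).trace.re = TA := by
      rw [hAA]
      exact mpow_trace_re hρH α
    rw [he1, ← htras]
    have h3re := congrArg Complex.re he3
    rw [Complex.sub_re] at h3re
    have h2re := congrArg Complex.re he2
    rw [h2re]
    linarith
  have hT2 : ((Bb * Vd)ᴴ * (Bb * Vd)).trace.re = (mpow ρ (1-α) * σ).trace.re := by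
    have he1 : (Bb * Vd)ᴴ * (Bb * Vd) = Vdᴴ * ((Bbᴴ * Bb) * Vd) := by
      rw [Matrix.conjTranspose_mul]
      simp only [Matrix.mul_assoc]
    have he2 : (Vdᴴ * ((Bbᴴ * Bb) * Vd)).trace = (Bbᴴ * Bb).trace := by
      rw [Matrix.trace_mul_comm]
      calc ((Bbᴴ * Bb) * Vd * Vdᴴ).trace = ((Bbᴴ * Bb) * (Vd * Vdᴴ)).trace := by
            simp only [Matrix.mul_assoc]
        _ = (Bbᴴ * Bb).trace := by rw [hVV', mul_one]
    have he3 : Bbᴴ * Bb = Sq * (mpow ρ (1-α)) * Sq := by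
      rw [hBb_def, Matrix.conjTranspose_mul, hSqH.eq, hRrH.eq, ← hRR]
      simp only [Matrix.mul_assoc]
    have he4 : (Sq * (mpow ρ (1-α)) * Sq).trace = (mpow ρ (1-α) * σ).trace := by
      rw [Matrix.trace_mul_cycle, hSq2, Matrix.trace_mul_comm]
    rw [he1, he2, he3, he4]
  -- double-sum form
  set K : Matrix n n ℂ := (hρH.eigenvectorUnitary : Matrix n n ℂ)ᴴ *
    (hσH.eigenvectorUnitary : Matrix n n ℂ) with hK_def
  have hKrow : ∀ i, ∑ j, Complex.normSq (K i j) = 1 := by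
    intro i
    refine unitary_row_sum ?_ i
    rw [hK_def, Matrix.conjTranspose_mul, Matrix.conjTranspose_conjTranspose]
    calc (hρH.eigenvectorUnitary : Matrix n n ℂ)ᴴ * (hσH.eigenvectorUnitary : Matrix n n ℂ) *
          ((hσH.eigenvectorUnitary : Matrix n n ℂ)ᴴ * (hρH.eigenvectorUnitary : Matrix n n ℂ))
        = (hρH.eigenvectorUnitary : Matrix n n ℂ)ᴴ *
          ((hσH.eigenvectorUnitary : Matrix n n ℂ) * (hσH.eigenvectorUnitary : Matrix n n ℂ)ᴴ) *
          (hρH.eigenvectorUnitary : Matrix n n ℂ) := by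
          simp only [Matrix.mul_assoc]
      _ = 1 := by rw [eigUnit_mulh hσH, mul_one, eigUnit_hmul hρH]
  have hKcol : ∀ j, ∑ i, Complex.normSq (K i j) = 1 := by
    intro j
    refine unitary_col_sum ?_ j
    rw [hK_def, Matrix.conjTranspose_mul, Matrix.conjTranspose_conjTranspose]
    calc (hσH.eigenvectorUnitary : Matrix n n ℂ)ᴴ * (hρH.eigenvectorUnitary : Matrix n n ℂ) *
          ((hρH.eigenvectorUnitary : Matrix n n ℂ)ᴴ * (hσH.eigenvectorUnitary : Matrix n n ℂ))
        = (hσH.eigenvectorUnitary : Matrix n n ℂ)ᴴ *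
          ((hρH.eigenvectorUnitary : Matrix n n ℂ) * (hρH.eigenvectorUnitary : Matrix n n ℂ)ᴴ) *
          (hσH.eigenvectorUnitary : Matrix n n ℂ) := by
          simp only [Matrix.mul_assoc]
      _ = 1 := by rw [eigUnit_mulh hρH, mul_one, eigUnit_hmul hσH]
  have hTBsum : (mpow ρ (1-α) * σ).trace.re
      = ∑ i, ∑ j, (a i) ^ (1-α) * b j * Complex.normSq (K i j) := by
    have e1 : mpow ρ (1-α) = (hρH.eigenvectorUnitary : Matrix n n ℂ) *
        Matrix.diagonal (fun i => (((a i) ^ (1-α) : ℝ) : ℂ)) *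
        (hρH.eigenvectorUnitary : Matrix n n ℂ)ᴴ := funCalc_eq' hρH _
    rw [e1]
    conv_lhs => rw [spectral_coe hσH]
    exact trace_mul_conj_pair _ _ _ _
  set TB : ℝ := ∑ i, ∑ j, (a i) ^ (1-α) * b j * Complex.normSq (K i j) with hTB_def
  have hTB0 : 0 ≤ TB := by
    refine Finset.sum_nonneg fun i _ => Finset.sum_nonneg fun j _ => ?_
    exact mul_nonneg (mul_nonneg (Real.rpow_nonneg (ha0 i) _) (hb0 j)) (Complex.normSq_nonneg _)
  -- Hölder
  have hpq : Real.HolderConjugate (α/(1-α)) β := by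
    rw [Real.holderConjugate_iff]
    constructor
    · rw [lt_div_iff₀ h1α]; linarith
    · rw [hβ, inv_div, inv_div]
      field_simp
      ring
  have hholder : TB ≤ TA ^ ((1-α)/α) * TS ^ ((1:ℝ)/β) := by
    have flat : TB = ∑ p : n × n, Complex.normSq (K p.1 p.2) *
        ((a p.1) ^ (1-α) * b p.2) := by
      rw [hTB_def, Fintype.sum_prod_type]
      exact Finset.sum_congr rfl fun i _ => Finset.sum_congr rfl fun j _ => by ring
    have key := holder_w (fun p : n × n => Complex.normSq (K p.1 p.2))
      (fun p : n × n => (a p.1) ^ (1-α)) (fun p : n × n => b p.2)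
      (fun p => Complex.normSq_nonneg _) (fun p => Real.rpow_nonneg (ha0 p.1) _)
      (fun p => hb0 p.2) hpq
    have s1 : ∑ p : n × n, Complex.normSq (K p.1 p.2) * ((a p.1) ^ (1-α)) ^ (α/(1-α)) = TA := by
      rw [Fintype.sum_prod_type, hTA_def]
      refine Finset.sum_congr rfl fun i _ => ?_
      show ∑ j, Complex.normSq (K i j) * ((a i) ^ (1-α)) ^ (α/(1-α)) = a i ^ α
      have hpw : ((a i) ^ (1-α)) ^ (α/(1-α)) = (a i) ^ α := by
        rw [← Real.rpow_mul (ha0 i)]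
        congr 1
        field_simp
      rw [hpw, ← Finset.sum_mul, hKrow i, one_mul]
    have s2 : ∑ p : n × n, Complex.normSq (K p.1 p.2) * (b p.2) ^ β = TS := by
      rw [Fintype.sum_prod_type, Finset.sum_comm, hTS_def]
      refine Finset.sum_congr rfl fun j _ => ?_
      show ∑ i, Complex.normSq (K i j) * (b j) ^ β = b j ^ β
      rw [← Finset.sum_mul, hKcol j, one_mul]
    rw [flat]
    calc ∑ p : n × n, Complex.normSq (K p.1 p.2) * ((a p.1) ^ (1-α) * b p.2)
        ≤ (∑ p : n × n, Complex.normSq (K p.1 p.2) * ((a p.1) ^ (1-α)) ^ (α/(1-α)))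
            ^ (1/(α/(1-α))) *
          (∑ p : n × n, Complex.normSq (K p.1 p.2) * (b p.2) ^ β) ^ (1/β) := key
      _ = TA ^ ((1-α)/α) * TS ^ ((1:ℝ)/β) := by rw [s1, s2, one_div_div]
  -- assemble the product bound
  have hfid0 : 0 < fid ρ σ := lt_of_lt_of_le hF hfid
  have hT1nn : 0 ≤ ((Aa * Wm)ᴴ * (Aa * Wm)).trace.re :=
    psd_trace_re_nonneg (Matrix.posSemidef_conjTranspose_mul_self _)
  have hsq : (fid ρ σ) ^ (2:ℕ) ≤ TA * TB := by
    have h5 : (((Aa * Wm)ᴴ * (Aa * Wm)).trace.re) * (((Bb * Vd)ᴴ * (Bb * Vd)).trace.re)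
        ≤ TA * TB := by
      rw [hT2, hTBsum]
      exact mul_le_mul_of_nonneg_right hT1 hTB0
    have h6 : fid ρ σ ≤ Real.sqrt (TA * TB) := hcs.trans (Real.sqrt_le_sqrt h5)
    calc (fid ρ σ) ^ (2:ℕ) ≤ (Real.sqrt (TA * TB)) ^ (2:ℕ) := by
          exact pow_le_pow_left₀ hfid0.le h6 2
      _ = TA * TB := Real.sq_sqrt (mul_nonneg hTA0.le hTB0)
  have hprod : TA * TB ≤ TA ^ ((1:ℝ)/α) * TS ^ ((1:ℝ)/β) := by
    calc TA * TB ≤ TA * (TA ^ ((1-α)/α) * TS ^ ((1:ℝ)/β)) :=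
          mul_le_mul_of_nonneg_left hholder hTA0.le
      _ = (TA ^ (1:ℝ) * TA ^ ((1-α)/α)) * TS ^ ((1:ℝ)/β) := by rw [Real.rpow_one]; ring
      _ = TA ^ ((1:ℝ)/α) * TS ^ ((1:ℝ)/β) := by
          rw [← Real.rpow_add hTA0, show (1 : ℝ) + (1-α)/α = 1/α by field_simp; ring]
  -- take logarithms
  have hlog : 2 * Real.logb 2 (fid ρ σ) ≤ (1/α) * Real.logb 2 TA + (1/β) * Real.logb 2 TS := by
    have h6 : (fid ρ σ) ^ (2:ℕ) ≤ TA ^ ((1:ℝ)/α) * TS ^ ((1:ℝ)/β) := hsq.trans hprod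
    have h7 := Real.logb_le_logb_of_le (by norm_num : (1:ℝ) < 2) (pow_pos hfid0 2) h6
    rw [Real.logb_pow] at h7
    rw [Real.logb_mul (ne_of_gt (Real.rpow_pos_of_pos hTA0 _))
      (ne_of_gt (Real.rpow_pos_of_pos hTS0 _)),
      Real.logb_rpow_eq_mul_logb_of_pos hTA0, Real.logb_rpow_eq_mul_logb_of_pos hTS0] at h7
    push_cast at h7
    linarith
  have hlogF : Real.logb 2 F ≤ Real.logb 2 (fid ρ σ) :=
    Real.logb_le_logb_of_le (by norm_num : (1:ℝ) < 2) hF hfid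
  -- unfold the goal
  have hreα : renyiEntropy α ρ = (1 / (1 - α)) * Real.logb 2 TA := by
    rw [renyiEntropy, if_neg (by intro hcc; linarith)]
    congr 1
    exact congrArg (Real.logb 2) (mpow_trace_re hρH α)
  have hreβ : renyiEntropy β σ = (1 / (1 - β)) * Real.logb 2 TS := by
    rw [renyiEntropy, if_neg (by intro hcc; linarith)]
    congr 1
    exact congrArg (Real.logb 2) (mpow_trace_re hσH β)
  rw [hreα, hreβ]
  -- final arithmetic
  have h1mb : 1 - β = (α - 1)/(2*α - 1) := by
    rw [hβ, eq_div_iff h2α1.ne']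
    rw [sub_mul, div_mul_cancel₀ _ h2α1.ne']
    ring
  have hc1 : (1:ℝ) / (1 - β) = -((2*α - 1)/(1 - α)) := by
    rw [h1mb, one_div_div, show α - 1 = -(1 - α) by ring, div_neg]
  have hc2 : (1:ℝ) / β = (2*α - 1)/α := by
    rw [hβ, one_div_div]
  rw [hc2] at hlog
  rw [hc1]
  have hm1 : (2 * α / (1 - α)) * Real.logb 2 F ≤ (2 * α / (1 - α)) * Real.logb 2 (fid ρ σ) :=
    mul_le_mul_of_nonneg_left hlogF (by positivity)
  have hm2 : (α / (1 - α)) * (2 * Real.logb 2 (fid ρ σ))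
      ≤ (α / (1 - α)) * ((1/α) * Real.logb 2 TA + ((2*α - 1)/α) * Real.logb 2 TS) :=
    mul_le_mul_of_nonneg_left hlog (by positivity)
  have hrw1 : (α / (1 - α)) * (2 * Real.logb 2 (fid ρ σ))
      = (2 * α / (1 - α)) * Real.logb 2 (fid ρ σ) := by ring
  have hrw2 : (α / (1 - α)) * ((1/α) * Real.logb 2 TA + ((2*α - 1)/α) * Real.logb 2 TS)
      = (1 / (1 - α)) * Real.logb 2 TA + ((2*α - 1)/(1 - α)) * Real.logb 2 TS := by
    field_simp
  rw [hrw1, hrw2] at hm2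
  linarith
end
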